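/- Suppose zer(A+B+C) ≠ ∅. Then for the sequences generated by the AFBF algorithm with Stepsize Choice 1 one has ∑_{k=0}^∞ ‖x_k − p_k‖² < ∞ and ∑_{k=0}^∞ ‖z_k − q_k‖² < ∞; moreover ‖z_k − q_k‖ ≤ (1 + √α_k)‖x_k − p_k‖ for every k ∈ ℕ. -/

import Mathlib

open scoped RealInnerProductSpace Pointwise
open Filter Topology

lemma afbf_aux {H : Type*} [NormedAddCommGroup H] [InnerProductSpace ℝ H]
    (v W E : H) :
    ‖v - (W - E)‖ ^ 2 = ‖v‖ ^ 2 - ‖W‖ ^ 2 + ‖E‖ ^ 2 - 2 * ⟪W - E, v - W⟫ := by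
  have h1 := norm_sub_sq_real v (W - E)
  have h2 := norm_sub_sq_real W E
  have h3 : ⟪v, W - E⟫ = ⟪W, W - E⟫ + ⟪v - W, W - E⟫ := by
    rw [← inner_add_left, add_sub_cancel]
  have h4 : ⟪W, W - E⟫ = ‖W‖ ^ 2 - ⟪W, E⟫ := by
    rw [inner_sub_right, real_inner_self_eq_norm_sq]
  have h5 : ⟪W - E, v - W⟫ = ⟪v - W, W - E⟫ := real_inner_comm _ _
  linarith

set_option maxHeartbeats 1000000 in
theorem afbf_summability
    {H : Type*} [NormedAddCommGroup H] [InnerProductSpace ℝ H] [FiniteDimensional ℝ H]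
    (A B : H → H) (C : H → Set H)
    (domC : Set H) (hdomC : domC = {x : H | (C x).Nonempty})
    (hdom_ne : domC.Nonempty) (hdom_closed : IsClosed domC) (hdom_conv : Convex ℝ domC)
    -- C is maximally monotone
    (hCmono : ∀ x y : H, ∀ u ∈ C x, ∀ v ∈ C y, 0 ≤ ⟪u - v, x - y⟫)
    (hCmax : ∀ x u : H, (∀ y : H, ∀ v ∈ C y, 0 ≤ ⟪u - v, x - y⟫) → u ∈ C x)
    -- A is continuous on dom C
    (hAcont : ContinuousOn A domC)
    -- B is L-Lipschitz on dom C
    (L : ℝ) (hL : 0 < L)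
    (hB : ∀ x ∈ domC, ∀ y ∈ domC, ‖B x - B y‖ ≤ L * ‖x - y‖)
    -- A + B + C is pseudo-monotone
    (hpseudo : ∀ x y : H,
      (∃ cx ∈ C x, 0 ≤ ⟪A x + B x + cx, y - x⟫) →
      ∀ cy ∈ C y, 0 ≤ ⟪A y + B y + cy, y - x⟫)
    -- metric projection onto dom C
    (projC : H → H)
    (hproj_mem : ∀ w : H, projC w ∈ domC)
    (hproj_dist : ∀ w : H, ∀ y ∈ domC, ‖w - projC w‖ ≤ ‖w - y‖)
    -- resolvent of γ C : single-valued, defined on all of H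
    (J : ℝ → H → H)
    (hJ : ∀ γ : ℝ, 0 < γ → ∀ zz pz : H, J γ zz = pz ↔ zz - pz ∈ γ • C pz)
    -- Assumption 1(v)
    (ζ τ : ℝ) (hζ : 0 < ζ) (hτ : 0 < τ)
    (hres : ∀ (uu w : H) (γ : ℝ), 0 < γ →
      ‖projC w - J γ (projC w - γ • uu)‖ ≤ γ * (ζ * ‖uu‖ + τ))
    -- generalized Lipschitz condition on A with μ = 2
    (θ β : ℝ) (hθ : 2 ≤ θ) (hβ : 2 ≤ β)
    (a b c : H → ℝ)
    (ha_cont : Continuous a) (hb_cont : Continuous b) (hc_cont : Continuous c)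
    (ha_nn : ∀ v : H, 0 ≤ a v) (hb_nn : ∀ v : H, 0 ≤ b v) (hc_nn : ∀ v : H, 0 ≤ c v)
    (hA : ∀ z₁ ∈ domC, ∀ z₂ ∈ domC,
      ‖A z₁ - A z₂‖ ^ 2 ≤
        a z₁ * ‖z₁ - z₂‖ ^ 2 + b z₁ * ‖z₁ - z₂‖ ^ θ + c z₁ * ‖z₁ - z₂‖ ^ β)
    -- d(x) = ζ‖Ax + Bx‖ + τ
    (d : H → ℝ) (hd : ∀ v : H, d v = ζ * ‖A v + B v‖ + τ)
    -- Stepsize Choice 1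
    (αmin αmax σ : ℝ) (hαmin : 0 < αmin) (hα_le : αmin ≤ αmax) (hαmax : αmax < 1)
    (hσ : 0 < σ)
    (α : ℕ → ℝ) (hα : ∀ k : ℕ, α k ∈ Set.Icc αmin αmax)
    (x z p qq xhat u : ℕ → H) (γ γbar : ℕ → ℝ)
    (hγbar_pos : ∀ k : ℕ, 0 < γbar k)
    (hγbar_eq : ∀ k : ℕ,
      b (x k) * d (x k) ^ (θ - 2) * γbar k ^ θ
        + c (x k) * d (x k) ^ (β - 2) * γbar k ^ β
        + (L ^ 2 + a (x k)) * γbar k ^ 2 = α k / 2)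
    (hγ_le : ∀ k : ℕ, σ ≤ γbar k → σ ≤ γ k ∧ γ k ≤ γbar k)
    (hγ_eq : ∀ k : ℕ, γbar k < σ → γ k = γbar k)
    -- AFBF iterations
    (hx0 : x 0 ∈ domC)
    (hz : ∀ k : ℕ, z k = x k - γ k • (A (x k) + B (x k)))
    (hp : ∀ k : ℕ, p k = J (γ k) (z k))
    (hq : ∀ k : ℕ, qq k = p k - γ k • (A (p k) + B (p k)))
    (hxhat : ∀ k : ℕ, xhat k = qq k - z k + x k)
    (hx_succ : ∀ k : ℕ, x (k + 1) = projC (xhat k))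
    (hu : ∀ k : ℕ, u k = (γ k)⁻¹ • (z k - p k) + A (p k) + B (p k))
    -- zer(A+B+C) ≠ ∅
    (hzer : ∃ zb : H, ∃ c0 ∈ C zb, A zb + B zb + c0 = 0) :
    Summable (fun k : ℕ => ‖x k - p k‖ ^ 2) ∧
    Summable (fun k : ℕ => ‖z k - qq k‖ ^ 2) ∧
    ∀ k : ℕ, ‖z k - qq k‖ ≤ (1 + Real.sqrt (α k)) * ‖x k - p k‖ := by
  classical
  obtain ⟨zb, c0, hc0, hzb⟩ := hzer
  have hzb_dom : zb ∈ domC := by rw [hdomC]; exact ⟨c0, hc0⟩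
  -- projection: variational inequality
  have hproj_inner : ∀ (w : H), ∀ y ∈ domC, ⟪w - projC w, y - projC w⟫ ≤ 0 := by
    intro w y hy
    haveI : Nonempty ↑domC := hdom_ne.to_subtype
    have hinf : ‖w - projC w‖ = ⨅ q : domC, ‖w - q‖ :=
      le_antisymm (le_ciInf fun q => hproj_dist w q q.2)
        (ciInf_le (f := fun q : domC => ‖w - (q : H)‖) ⟨0, by rintro r ⟨q, rfl⟩; exact norm_nonneg _⟩ ⟨projC w, hproj_mem w⟩)
    exact ((norm_eq_iInf_iff_real_inner_le_zero hdom_conv (hproj_mem w)).mp hinf) y hy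
  -- projection contracts distances to points of domC
  have hproj_contract : ∀ (w : H), ∀ y ∈ domC, ‖projC w - y‖ ≤ ‖w - y‖ := by
    intro w y hy
    have h1 := hproj_inner w y hy
    have hexp : ‖w - y‖ ^ 2
        = ‖w - projC w‖ ^ 2 + 2 * ⟪w - projC w, projC w - y⟫ + ‖projC w - y‖ ^ 2 := by
      rw [show w - y = (w - projC w) + (projC w - y) by abel, norm_add_sq_real]
    have h2 : 0 ≤ ⟪w - projC w, projC w - y⟫ := by
      rw [show projC w - y = -(y - projC w) by abel, inner_neg_right]
      linarith
    have hsq : ‖projC w - y‖ ^ 2 ≤ ‖w - y‖ ^ 2 := by nlinarith [sq_nonneg ‖w - projC w‖]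
    nlinarith [norm_nonneg (projC w - y), norm_nonneg (w - y)]
  have hx_dom : ∀ k, x k ∈ domC := by
    intro k
    cases k with
    | zero => exact hx0
    | succ n => rw [hx_succ n]; exact hproj_mem _
  have hγpos : ∀ k, 0 < γ k := by
    intro k
    by_cases h : σ ≤ γbar k
    · linarith [(hγ_le k h).1]
    · rw [hγ_eq k (not_le.mp h)]; exact hγbar_pos k
  have hγle : ∀ k, γ k ≤ γbar k := by
    intro k
    by_cases h : σ ≤ γbar k
    · exact (hγ_le k h).2
    · rw [hγ_eq k (not_le.mp h)]
  have hvk : ∀ k, ∃ v ∈ C (p k), γ k • v = z k - p k := by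
    intro k
    have := (hJ (γ k) (hγpos k) (z k) (p k)).mp (hp k).symm
    rwa [Set.mem_smul_set] at this
  have hp_dom : ∀ k, p k ∈ domC := by
    intro k
    obtain ⟨v, hv1, -⟩ := hvk k
    rw [hdomC]; exact ⟨v, hv1⟩
  have hd_pos : ∀ y : H, 0 < d y := by
    intro y
    rw [hd]
    have := mul_nonneg hζ.le (norm_nonneg (A y + B y))
    linarith
  have hxp : ∀ k, ‖x k - p k‖ ≤ γ k * d (x k) := by
    intro k
    have hproj_eq : projC (x k) = x k := by
      have h := hproj_dist (x k) (x k) (hx_dom k)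
      simp only [sub_self, norm_zero] at h
      have : ‖x k - projC (x k)‖ = 0 := le_antisymm h (norm_nonneg _)
      have := sub_eq_zero.mp (norm_eq_zero.mp this)
      exact this.symm
    have h := hres (A (x k) + B (x k)) (x k) (γ k) (hγpos k)
    rw [hproj_eq] at h
    rw [hp k, hz k, hd]
    exact h
  have hα_pos : ∀ k, 0 < α k := fun k => lt_of_lt_of_le hαmin (hα k).1
  have hα_lt1 : ∀ k, α k < 1 := fun k => lt_of_le_of_lt (hα k).2 hαmax
  -- coefficient bound at γ k
  have hcoef : ∀ k,
      b (x k) * d (x k) ^ (θ - 2) * γ k ^ θ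
        + c (x k) * d (x k) ^ (β - 2) * γ k ^ β
        + (L ^ 2 + a (x k)) * γ k ^ 2 ≤ α k / 2 := by
    intro k
    rw [← hγbar_eq k]
    have h1 : γ k ^ θ ≤ γbar k ^ θ :=
      Real.rpow_le_rpow (hγpos k).le (hγle k) (by linarith)
    have h2 : γ k ^ β ≤ γbar k ^ β :=
      Real.rpow_le_rpow (hγpos k).le (hγle k) (by linarith)
    have h3 : γ k ^ 2 ≤ γbar k ^ 2 := pow_le_pow_left₀ (hγpos k).le (hγle k) 2
    have hb' := hb_nn (x k)
    have hc' := hc_nn (x k)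
    have ha' := ha_nn (x k)
    have hdθ : (0:ℝ) ≤ d (x k) ^ (θ - 2) := Real.rpow_nonneg (hd_pos _).le _
    have hdβ : (0:ℝ) ≤ d (x k) ^ (β - 2) := Real.rpow_nonneg (hd_pos _).le _
    have hL2 : (0:ℝ) ≤ L ^ 2 + a (x k) := by positivity
    nlinarith [mul_le_mul_of_nonneg_left h1 (mul_nonneg hb' hdθ),
      mul_le_mul_of_nonneg_left h2 (mul_nonneg hc' hdβ),
      mul_le_mul_of_nonneg_left h3 hL2]
  -- key estimate
  have hE : ∀ k, ‖γ k • (A (x k) + B (x k) - (A (p k) + B (p k)))‖ ^ 2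
      ≤ α k * ‖x k - p k‖ ^ 2 := by
    intro k
    set g := γ k with hg
    set w := ‖x k - p k‖ with hw
    have hgpos := hγpos k
    have hw0 : (0:ℝ) ≤ w := norm_nonneg _
    have hwle : w ≤ g * d (x k) := hxp k
    have hAk := hA (x k) (hx_dom k) (p k) (hp_dom k)
    have hBk := hB (x k) (hx_dom k) (p k) (hp_dom k)
    have hdiff : ‖A (x k) + B (x k) - (A (p k) + B (p k))‖ ^ 2
        ≤ 2 * (a (x k) * w ^ 2 + b (x k) * w ^ θ + c (x k) * w ^ β) + 2 * L ^ 2 * w ^ 2 := by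
      have h1 : ‖A (x k) + B (x k) - (A (p k) + B (p k))‖
          ≤ ‖A (x k) - A (p k)‖ + ‖B (x k) - B (p k)‖ := by
        rw [show A (x k) + B (x k) - (A (p k) + B (p k))
            = (A (x k) - A (p k)) + (B (x k) - B (p k)) by abel]
        exact norm_add_le _ _
      nlinarith [sq_nonneg (‖A (x k) - A (p k)‖ - ‖B (x k) - B (p k)‖),
        norm_nonneg (A (x k) - A (p k)), norm_nonneg (B (x k) - B (p k)),
        norm_nonneg (A (x k) + B (x k) - (A (p k) + B (p k))),
        mul_nonneg hL.le hw0]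
    have hnsmul : ‖g • (A (x k) + B (x k) - (A (p k) + B (p k)))‖ ^ 2
        = g ^ 2 * ‖A (x k) + B (x k) - (A (p k) + B (p k))‖ ^ 2 := by
      rw [norm_smul, Real.norm_eq_abs, abs_of_pos hgpos, mul_pow]
    -- bound the three powered terms
    have hdpos := hd_pos (x k)
    have key : g ^ 2 * (a (x k) * w ^ 2 + b (x k) * w ^ θ + c (x k) * w ^ β + L ^ 2 * w ^ 2)
        ≤ (α k / 2) * w ^ 2 := by
      rcases eq_or_lt_of_le hw0 with h0 | h0
      · rw [← h0]
        have hθ0 : (0:ℝ) ^ θ = 0 := Real.zero_rpow (by linarith)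
        have hβ0 : (0:ℝ) ^ β = 0 := Real.zero_rpow (by linarith)
        rw [hθ0, hβ0]
        simp
      · have hsplit : ∀ e : ℝ, 2 ≤ e → w ^ e = w ^ (e - 2) * w ^ 2 := by
          intro e he
          rw [show w ^ 2 = w ^ (2:ℝ) by rw [← Real.rpow_natCast w 2]; norm_num,
            ← Real.rpow_add h0]
          ring_nf
        have hgsplit : ∀ e : ℝ, 2 ≤ e → g ^ e = g ^ (e - 2) * g ^ 2 := by
          intro e he
          rw [show g ^ 2 = g ^ (2:ℝ) by rw [← Real.rpow_natCast g 2]; norm_num,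
            ← Real.rpow_add hgpos]
          ring_nf
          rfl
        have hmono : ∀ e : ℝ, 2 ≤ e → w ^ (e - 2) ≤ g ^ (e - 2) * d (x k) ^ (e - 2) := by
          intro e he
          calc w ^ (e - 2) ≤ (g * d (x k)) ^ (e - 2) :=
                Real.rpow_le_rpow hw0 hwle (by linarith)
            _ = g ^ (e - 2) * d (x k) ^ (e - 2) := Real.mul_rpow hgpos.le hdpos.le
        have t1 : g ^ 2 * (b (x k) * w ^ θ)
            ≤ b (x k) * d (x k) ^ (θ - 2) * g ^ θ * w ^ 2 := by
          rw [hsplit θ hθ, hgsplit θ hθ]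
          have hb' := hb_nn (x k)
          calc g ^ 2 * (b (x k) * (w ^ (θ - 2) * w ^ 2))
              = b (x k) * (w ^ (θ - 2) * (g ^ 2 * w ^ 2)) := by ring
            _ ≤ b (x k) * ((g ^ (θ - 2) * d (x k) ^ (θ - 2)) * (g ^ 2 * w ^ 2)) := by
                refine mul_le_mul_of_nonneg_left ?_ hb'
                exact mul_le_mul_of_nonneg_right (hmono θ hθ) (by positivity)
            _ = b (x k) * d (x k) ^ (θ - 2) * (g ^ (θ - 2) * g ^ 2) * w ^ 2 := by ring
        have t2 : g ^ 2 * (c (x k) * w ^ β)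
            ≤ c (x k) * d (x k) ^ (β - 2) * g ^ β * w ^ 2 := by
          rw [hsplit β hβ, hgsplit β hβ]
          have hc' := hc_nn (x k)
          calc g ^ 2 * (c (x k) * (w ^ (β - 2) * w ^ 2))
              = c (x k) * (w ^ (β - 2) * (g ^ 2 * w ^ 2)) := by ring
            _ ≤ c (x k) * ((g ^ (β - 2) * d (x k) ^ (β - 2)) * (g ^ 2 * w ^ 2)) := by
                refine mul_le_mul_of_nonneg_left ?_ hc'
                exact mul_le_mul_of_nonneg_right (hmono β hβ) (by positivity)
            _ = c (x k) * d (x k) ^ (β - 2) * (g ^ (β - 2) * g ^ 2) * w ^ 2 := by ring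
        have t3 : g ^ 2 * (a (x k) * w ^ 2 + L ^ 2 * w ^ 2)
            = (L ^ 2 + a (x k)) * g ^ 2 * w ^ 2 := by ring
        have hc2 := hcoef k
        have hfin := mul_le_mul_of_nonneg_right hc2 (sq_nonneg w)
        rw [← hg] at hfin
        linarith [t1, t2, hfin]
    rw [hnsmul]
    linarith [mul_le_mul_of_nonneg_left hdiff (sq_nonneg g), key]
  -- z - q = (x - p) - E
  have hWE : ∀ k, z k - qq k
      = (x k - p k) - γ k • (A (x k) + B (x k) - (A (p k) + B (p k))) := by
    intro k
    rw [hz k, hq k, smul_sub]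
    abel
  have hEnorm : ∀ k, ‖γ k • (A (x k) + B (x k) - (A (p k) + B (p k)))‖
      ≤ Real.sqrt (α k) * ‖x k - p k‖ := by
    intro k
    have h := Real.sqrt_le_sqrt (hE k)
    rwa [Real.sqrt_sq (norm_nonneg _), Real.sqrt_mul (hα_pos k).le,
      Real.sqrt_sq (norm_nonneg _)] at h
  have claim3 : ∀ k, ‖z k - qq k‖ ≤ (1 + Real.sqrt (α k)) * ‖x k - p k‖ := by
    intro k
    rw [hWE k]
    calc ‖(x k - p k) - γ k • (A (x k) + B (x k) - (A (p k) + B (p k)))‖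
        ≤ ‖x k - p k‖ + ‖γ k • (A (x k) + B (x k) - (A (p k) + B (p k)))‖ :=
          norm_sub_le _ _
      _ ≤ (1 + Real.sqrt (α k)) * ‖x k - p k‖ := by
          have := hEnorm k; ring_nf; nlinarith [this]
  -- pseudo-monotonicity gives nonnegative inner product
  have hinnerpos : ∀ k, 0 ≤ ⟪z k - qq k, p k - zb⟫ := by
    intro k
    obtain ⟨v, hv1, hv2⟩ := hvk k
    have hzq : z k - qq k = γ k • (A (p k) + B (p k) + v) := by
      calc z k - qq k = (z k - p k) + γ k • (A (p k) + B (p k)) := by rw [hq k]; abel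
        _ = γ k • v + γ k • (A (p k) + B (p k)) := by rw [hv2]
        _ = γ k • (A (p k) + B (p k) + v) := by rw [← smul_add, add_comm v]
    have hps : 0 ≤ ⟪A (p k) + B (p k) + v, p k - zb⟫ := by
      refine hpseudo zb (p k) ⟨c0, hc0, ?_⟩ v hv1
      rw [hzb, inner_zero_left]
    rw [hzq, real_inner_smul_left]
    exact mul_nonneg (hγpos k).le hps
  -- Fejér inequality
  have hfejer : ∀ k,
      ‖x (k + 1) - zb‖ ^ 2 + (1 - α k) * ‖x k - p k‖ ^ 2 ≤ ‖x k - zb‖ ^ 2 := by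
    intro k
    have hxhat_eq : xhat k - zb
        = (x k - zb) - ((x k - p k)
            - γ k • (A (x k) + B (x k) - (A (p k) + B (p k)))) := by
      rw [hxhat k, ← hWE k]; abel
    have hid := afbf_aux (x k - zb) (x k - p k)
        (γ k • (A (x k) + B (x k) - (A (p k) + B (p k))))
    rw [← hxhat_eq] at hid
    rw [show (x k - zb) - (x k - p k) = p k - zb by abel] at hid
    have hin : 0 ≤ ⟪(x k - p k)
        - γ k • (A (x k) + B (x k) - (A (p k) + B (p k))), p k - zb⟫ := by
      rw [← hWE k]; exact hinnerpos k
    have hproj_step : ‖x (k + 1) - zb‖ ^ 2 ≤ ‖xhat k - zb‖ ^ 2 := by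
      have h := hproj_contract (xhat k) zb hzb_dom
      rw [← hx_succ k] at h
      exact pow_le_pow_left₀ (norm_nonneg _) h 2
    have hEk := hE k
    nlinarith [hin]
  -- telescoping sum
  have hsum_tel : ∀ n, ∑ k ∈ Finset.range n, (1 - αmax) * ‖x k - p k‖ ^ 2
      + ‖x n - zb‖ ^ 2 ≤ ‖x 0 - zb‖ ^ 2 := by
    intro n
    induction n with
    | zero => simp
    | succ n ih =>
      rw [Finset.sum_range_succ]
      have h1 := hfejer n
      have h2 : (1 - αmax) * ‖x n - p n‖ ^ 2 ≤ (1 - α n) * ‖x n - p n‖ ^ 2 :=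
        mul_le_mul_of_nonneg_right (by linarith [(hα n).2]) (sq_nonneg _)
      linarith
  have hsum1 : Summable (fun k : ℕ => ‖x k - p k‖ ^ 2) := by
    refine summable_of_sum_range_le (fun n => sq_nonneg _)
      (c := ‖x 0 - zb‖ ^ 2 / (1 - αmax)) (fun n => ?_)
    rw [le_div_iff₀ (by linarith : (0:ℝ) < 1 - αmax)]
    have := hsum_tel n
    rw [← Finset.mul_sum] at this
    nlinarith [sq_nonneg ‖x n - zb‖]
  have hsum2 : Summable (fun k : ℕ => ‖z k - qq k‖ ^ 2) := by
    refine Summable.of_nonneg_of_le (fun k => sq_nonneg _) (fun k => ?_)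
      (hsum1.mul_left 4)
    have h1 := claim3 k
    have h2 : Real.sqrt (α k) ≤ 1 := by
      rw [show (1:ℝ) = Real.sqrt 1 by rw [Real.sqrt_one]]
      exact Real.sqrt_le_sqrt (by linarith [hα_lt1 k])
    have h3 : ‖z k - qq k‖ ≤ 2 * ‖x k - p k‖ := by
      calc ‖z k - qq k‖ ≤ (1 + Real.sqrt (α k)) * ‖x k - p k‖ := h1
        _ ≤ 2 * ‖x k - p k‖ :=
          mul_le_mul_of_nonneg_right (by linarith) (norm_nonneg _)
    nlinarith [norm_nonneg (z k - qq k), norm_nonneg (x k - p k)]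
  exact ⟨hsum1, hsum2, claim3⟩
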